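/- Let Z₁,...,Z_T be independent Bernoulli(p_t) with p_t ∈ (0,1), Z̃_t = (Z_t−p_t)/(p_t(1−p_t)), w_k = [(T−K)^{-1} Σ_{t=K+1}^T (p_{t-k}(1−p_{t-k}))^{-1}]^{-1}, and let Y_t be any function of (Z_t,...,Z_1). Then for every k ∈ {0,...,K}, E[(T−K)^{-1} Σ_{t=K+1}^T Z̃_{t-k}(Y_t − Σ_{ℓ=0}^K Z̃_{t-ℓ} w_ℓ τ_ℓ)] = 0, where τ_k = (T−K)^{-1} Σ_{t=K+1}^T E[Z̃_{t-k} Y_t]. -/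

import Mathlib

lemma sum_prod_bool {T : ℕ} (ν : Fin T → Bool → ℝ) :
    ∑ z : Fin T → Bool, ∏ t, ν t (z t) = ∏ t, (ν t true + ν t false) := by
  classical
  have h : ∀ t : Fin T, ν t true + ν t false = ∑ b : Bool, ν t b := by
    intro t; simp [add_comm]
  simp_rw [h]
  rw [Finset.prod_univ_sum]
  rw [Fintype.piFinset_univ]


/-- Expectation of a functional of a path of independent Bernoulli treatments
`Z_0,...,Z_{T-1}` with `P(Z_t = true) = p_t` (times `≥ T` are padded with `false`). -/
noncomputable def Exp (T : ℕ) (p : ℕ → ℝ) (g : (ℕ → Bool) → ℝ) : ℝ :=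
  ∑ z : Fin T → Bool,
    (∏ t : Fin T, if z t then p t.val else 1 - p t.val) *
      g (fun n => if h : n < T then z ⟨n, h⟩ else false)

/-- Normalized treatment indicator `Z̃_t = (Z_t - p_t)/(p_t(1-p_t))`. -/
noncomputable def ztil (p : ℕ → ℝ) (z : ℕ → Bool) (t : ℕ) : ℝ :=
  ((if z t then 1 else 0) - p t) / (p t * (1 - p t))

/-- Population OLS moment condition: with independent Bernoulli(p_t) treatments,
normalized indicators `Z̃_t`, harmonic-mean weights `w_k`, outcomes `Y_t` measurable
w.r.t. the past, and `τ_k = (T-K)⁻¹ Σ_t E[Z̃_{t-k} Y_t]`, for every `k ≤ K`: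
`E[(T-K)⁻¹ Σ_{t=K}^{T-1} Z̃_{t-k}(Y_t - Σ_{ℓ=0}^K Z̃_{t-ℓ} w_ℓ τ_ℓ)] = 0`
(times are indexed `0,...,T-1`, so `t` runs over `K,...,T-1`). -/
lemma Exp_ztil_mul_ztil (T : ℕ) (p : ℕ → ℝ) (hp : ∀ t, 0 < p t ∧ p t < 1)
    (a b : ℕ) (ha : a < T) (hb : b < T) :
    Exp T p (fun z => ztil p z a * ztil p z b) =
      if a = b then (p a * (1 - p a))⁻¹ else 0 := by
  classical
  set φ : ℕ → Bool → ℝ := fun s c => ((if c then (1:ℝ) else 0) - p s) / (p s * (1 - p s)) with hφ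
  have key : ∀ z : Fin T → Bool,
      (∏ t : Fin T, if z t then p t.val else 1 - p t.val) * (ztil p (fun n => if h : n < T then z ⟨n, h⟩ else false) a * ztil p (fun n => if h : n < T then z ⟨n, h⟩ else false) b)
      = ∏ t : Fin T, ((if z t then p t.val else 1 - p t.val) *
          (if t = ⟨a, ha⟩ then φ a (z t) else 1) * (if t = ⟨b, hb⟩ then φ b (z t) else 1)) := by
    intro z
    rw [Finset.prod_mul_distrib, Finset.prod_mul_distrib, Finset.prod_ite_eq' Finset.univ,
      Finset.prod_ite_eq' Finset.univ]
    simp [ztil, ha, hb, hφ]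
    ring
  unfold Exp
  simp only [key]
  rw [sum_prod_bool (fun t c => ((if c = true then p t.val else 1 - p t.val) * if t = ⟨a, ha⟩ then φ a c else 1) * if t = ⟨b, hb⟩ then φ b c else 1)]
  have hpa := hp a
  have hpb := hp b
  by_cases hab : a = b
  · subst hab
    simp only [if_pos rfl]
    rw [Finset.prod_eq_single ⟨a, ha⟩]
    · simp only [if_pos rfl, hφ]
      have h1 : p a ≠ 0 := ne_of_gt hpa.1
      have h2 : (1 : ℝ) - p a ≠ 0 := by linarith [hpa.2]
      field_simp
      simp only [if_true, Bool.false_eq_true, if_false]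
      field_simp
      ring
    · intro t _ ht
      rw [if_neg ht, if_neg ht]
      simp
    · simp
  · rw [if_neg hab]
    apply Finset.prod_eq_zero (Finset.mem_univ (⟨a, ha⟩ : Fin T))
    have hne : (⟨a, ha⟩ : Fin T) ≠ ⟨b, hb⟩ := by
      simp [Fin.ext_iff]; omega
    simp only [if_pos, if_neg hne, hφ]
    have h1 : p a ≠ 0 := ne_of_gt hpa.1
    have h2 : (1 : ℝ) - p a ≠ 0 := by linarith [hpa.2]
    norm_num
    field_simp
    ring

lemma Exp_sum {ι : Type*} (T : ℕ) (p : ℕ → ℝ) (s : Finset ι) (g : ι → (ℕ → Bool) → ℝ) :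
    Exp T p (fun z => ∑ i ∈ s, g i z) = ∑ i ∈ s, Exp T p (g i) := by
  unfold Exp; simp_rw [Finset.mul_sum]; rw [Finset.sum_comm]

lemma Exp_const_mul (T : ℕ) (p : ℕ → ℝ) (c : ℝ) (g : (ℕ → Bool) → ℝ) :
    Exp T p (fun z => c * g z) = c * Exp T p g := by
  unfold Exp; rw [Finset.mul_sum]; exact Finset.sum_congr rfl (fun z _ => by ring)

lemma Exp_sub (T : ℕ) (p : ℕ → ℝ) (g h : (ℕ → Bool) → ℝ) :
    Exp T p (fun z => g z - h z) = Exp T p g - Exp T p h := by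
  unfold Exp; rw [← Finset.sum_sub_distrib]
  exact Finset.sum_congr rfl (fun z _ => by ring)

theorem stmt7 (T K : ℕ) (hKT : K < T) (p : ℕ → ℝ) (hp : ∀ t, 0 < p t ∧ p t < 1)
    (Y : ℕ → (ℕ → Bool) → ℝ)
    (hYpast : ∀ t (z z' : ℕ → Bool), (∀ s ≤ t, z s = z' s) → Y t z = Y t z') :
    ∀ k ≤ K,
      let w : ℕ → ℝ := fun l =>
        ((T - K : ℝ)⁻¹ * ∑ s ∈ Finset.Ico K T, (p (s - l) * (1 - p (s - l)))⁻¹)⁻¹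
      let τ : ℕ → ℝ := fun l =>
        (T - K : ℝ)⁻¹ * ∑ s ∈ Finset.Ico K T, Exp T p (fun z => ztil p z (s - l) * Y s z)
      Exp T p (fun z => (T - K : ℝ)⁻¹ * ∑ t ∈ Finset.Ico K T,
        ztil p z (t - k) *
          (Y t z - ∑ l ∈ Finset.range (K + 1), ztil p z (t - l) * w l * τ l)) = 0 := by
  intro k hk w τ
  set c : ℝ := (T - K : ℝ)⁻¹ with hc
  -- pointwise rewrite of the integrand
  have hpt : ∀ z : ℕ → Bool, ∀ t ∈ Finset.Ico K T,
      ztil p z (t - k) * (Y t z - ∑ l ∈ Finset.range (K + 1), ztil p z (t - l) * w l * τ l)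
      = ztil p z (t - k) * Y t z -
        ∑ l ∈ Finset.range (K + 1), (w l * τ l) * (ztil p z (t - k) * ztil p z (t - l)) := by
    intro z t _
    rw [mul_sub, Finset.mul_sum]
    congr 1
    exact Finset.sum_congr rfl (fun l _ => by ring)
  have hExp : Exp T p (fun z => c * ∑ t ∈ Finset.Ico K T,
      ztil p z (t - k) *
        (Y t z - ∑ l ∈ Finset.range (K + 1), ztil p z (t - l) * w l * τ l))
      = c * ∑ t ∈ Finset.Ico K T,
          (Exp T p (fun z => ztil p z (t - k) * Y t z) -
            ∑ l ∈ Finset.range (K + 1), (w l * τ l) *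
              Exp T p (fun z => ztil p z (t - k) * ztil p z (t - l))) := by
    rw [Exp_const_mul]
    congr 1
    rw [show (fun z => ∑ t ∈ Finset.Ico K T,
        ztil p z (t - k) *
          (Y t z - ∑ l ∈ Finset.range (K + 1), ztil p z (t - l) * w l * τ l))
      = fun z => ∑ t ∈ Finset.Ico K T,
          (ztil p z (t - k) * Y t z -
            ∑ l ∈ Finset.range (K + 1), (w l * τ l) * (ztil p z (t - k) * ztil p z (t - l)))
      from funext fun z => Finset.sum_congr rfl (hpt z)]
    rw [Exp_sum]
    refine Finset.sum_congr rfl (fun t _ => ?_)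
    rw [Exp_sub]
    congr 1
    rw [Exp_sum]
    refine Finset.sum_congr rfl (fun l _ => ?_)
    exact Exp_const_mul T p _ _
  rw [hExp]
  -- compute the second moments
  have hmom : ∀ t ∈ Finset.Ico K T,
      ∑ l ∈ Finset.range (K + 1), (w l * τ l) *
        Exp T p (fun z => ztil p z (t - k) * ztil p z (t - l))
      = (w k * τ k) * (p (t - k) * (1 - p (t - k)))⁻¹ := by
    intro t ht
    rw [Finset.mem_Ico] at ht
    have heq : ∀ l ∈ Finset.range (K + 1),
        (w l * τ l) * Exp T p (fun z => ztil p z (t - k) * ztil p z (t - l))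
        = if l = k then (w l * τ l) * (p (t - k) * (1 - p (t - k)))⁻¹ else 0 := by
      intro l hl
      rw [Finset.mem_range] at hl
      rw [Exp_ztil_mul_ztil T p hp _ _ (by omega) (by omega)]
      by_cases hlk : l = k
      · subst hlk; rw [if_pos rfl, if_pos rfl]
      · rw [if_neg (by omega), if_neg hlk, mul_zero]
    rw [Finset.sum_congr rfl heq, Finset.sum_ite_eq' (Finset.range (K + 1)) k
      (fun l => (w l * τ l) * (p (t - k) * (1 - p (t - k)))⁻¹),
      if_pos (Finset.mem_range.mpr (by omega))]
  rw [Finset.sum_congr rfl (fun t ht => by rw [hmom t ht])]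
  rw [Finset.sum_sub_distrib, mul_sub]
  have hτ : c * ∑ t ∈ Finset.Ico K T, Exp T p (fun z => ztil p z (t - k) * Y t z) = τ k := rfl
  have hsum : c * ∑ t ∈ Finset.Ico K T, (w k * τ k) * (p (t - k) * (1 - p (t - k)))⁻¹
      = (w k * τ k) * (c * ∑ t ∈ Finset.Ico K T, (p (t - k) * (1 - p (t - k)))⁻¹) := by
    rw [← Finset.mul_sum]; ring
  rw [hτ, hsum]
  have hpos : 0 < c * ∑ t ∈ Finset.Ico K T, (p (t - k) * (1 - p (t - k)))⁻¹ := by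
    apply mul_pos
    · rw [hc]
      apply inv_pos.mpr
      have h5 : (K : ℝ) < T := by exact_mod_cast hKT
      linarith
    · apply Finset.sum_pos
      · intro s _
        have h1 := (hp (s - k)).1
        have h2 := (hp (s - k)).2
        apply inv_pos.mpr; apply mul_pos h1; linarith
      · exact ⟨K, Finset.mem_Ico.mpr ⟨le_refl K, hKT⟩⟩
  set S : ℝ := c * ∑ t ∈ Finset.Ico K T, (p (t - k) * (1 - p (t - k)))⁻¹ with hS
  have hwk : w k = S⁻¹ := rfl
  have hS0 : S ≠ 0 := ne_of_gt hpos
  rw [hwk, mul_comm (S⁻¹) (τ k), mul_assoc, inv_mul_cancel₀ hS0, mul_one, sub_self]
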